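/- Let R be a finite commutative chain ring with residue field of order 2 and maximal ideal ⟨s⟩ of nilpotency index t, and G cyclic of order p^n (p odd prime) generated by a, with 2 a primitive root mod p^n. For e = \widehat{⟨a^{p^j}⟩} − \widehat{⟨a^{p^{j-1}}⟩} (1 ≤ j ≤ n) and 0 ≤ k < t, the ideal ⟨s^k e⟩ of R[G] has cardinality 2^{(t-k)(p^j − p^{j-1})}. -/

import Mathlib

set_option linter.unusedSectionVars false
set_option maxHeartbeats 1000000


open IsLocalRing

section Chain
variable {R : Type*} [CommRing R] [IsLocalRing R] {s : R} {t : ℕ}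

lemma pow_ne_zero_of_lt (hst' : s ^ (t-1) ≠ 0) {i : ℕ} (hi : i < t) : s ^ i ≠ 0 := by
  intro h
  apply hst'
  have h2 : s ^ (t-1) = s ^ i * s ^ (t-1-i) := by rw [← pow_add]; congr 1; omega
  rw [h2, h, zero_mul]

lemma exists_unit_rep (hM : maximalIdeal R = Ideal.span {s}) (hst : s ^ t = 0)
    {r : R} (hr : r ≠ 0) : ∃ v u, v < t ∧ IsUnit u ∧ r = s ^ v * u := by
  classical
  set P : ℕ → Prop := fun v => s ^ v ∣ r with hP
  have h0 : P 0 := ⟨r, by rw [pow_zero, one_mul]⟩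
  have hspec : P (Nat.findGreatest P t) := Nat.findGreatest_spec (Nat.zero_le t) h0
  set v := Nat.findGreatest P t with hv
  have hvt : v ≤ t := Nat.findGreatest_le t
  have hvlt : v < t := by
    rcases lt_or_eq_of_le hvt with h | h
    · exact h
    · exfalso; apply hr
      rw [h, hP] at hspec
      simpa [hst] using hspec
  obtain ⟨u, hu⟩ := hspec
  refine ⟨v, u, hvlt, ?_, hu⟩
  by_contra hnu
  have hmem : u ∈ maximalIdeal R := hnu
  rw [hM, Ideal.mem_span_singleton] at hmem
  obtain ⟨w, hw⟩ := hmem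
  have : P (v + 1) := ⟨w, by rw [hu, hw, pow_succ, mul_assoc]⟩
  have := Nat.le_findGreatest hvlt this
  omega

lemma mem_span_of_mul_eq_zero (hM : maximalIdeal R = Ideal.span {s}) (hst : s ^ t = 0)
    (hst' : s ^ (t-1) ≠ 0) {i : ℕ} (hi : i ≤ t) {r : R} (hr : s ^ i * r = 0) :
    r ∈ Ideal.span ({s ^ (t - i)} : Set R) := by
  rcases eq_or_ne r 0 with rfl | hr0
  · exact zero_mem _
  obtain ⟨v, u, hvt, huu, rfl⟩ := exists_unit_rep hM hst hr0
  have hsv : s ^ (i + v) * u = 0 := by rw [pow_add, mul_assoc]; exact hr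
  have hsv0 : s ^ (i + v) = 0 := by
    have := congrArg (· * (huu.unit⁻¹ : Rˣ).1) hsv
    simpa [mul_assoc, IsUnit.mul_val_inv, huu] using this
  have hge : t ≤ i + v := by
    by_contra h
    exact pow_ne_zero_of_lt hst' (by omega) hsv0
  rw [Ideal.mem_span_singleton]
  exact ⟨s ^ (v - (t - i)) * u, by rw [← mul_assoc, ← pow_add]; congr 2; omega⟩
end Chain
open IsLocalRing

section Card
variable {R : Type*} [CommRing R] [IsLocalRing R] [Finite R] {s : R} {t : ℕ}

lemma pow_ne_zero_of_lt' (hst' : s ^ (t-1) ≠ 0) {i : ℕ} (hi : i < t) : s ^ i ≠ 0 := by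
  intro h
  apply hst'
  have h2 : s ^ (t-1) = s ^ i * s ^ (t-1-i) := by rw [← pow_add]; congr 1; omega
  rw [h2, h, zero_mul]

lemma card_span_succ (hres : Nat.card (R ⧸ maximalIdeal R) = 2)
    (hM : maximalIdeal R = Ideal.span {s}) (hst' : s ^ (t-1) ≠ 0)
    {i : ℕ} (hi : i < t) :
    Nat.card (Ideal.span {s ^ i} : Ideal R)
      = Nat.card (Ideal.span {s ^ (i+1)} : Ideal R) * 2 := by
  set J : Ideal R := Ideal.span {s ^ i} with hJ
  set J' : Ideal R := Ideal.span {s ^ (i+1)} with hJ'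
  have hle : J' ≤ J := by
    rw [hJ, hJ', Ideal.span_singleton_le_span_singleton]
    exact pow_dvd_pow s (Nat.le_succ i)
  set N : Submodule R J := Submodule.comap (Submodule.subtype J) J' with hN
  have hcard := Submodule.card_eq_card_quotient_mul_card (M := J) N
  have hcN : Nat.card N = Nat.card J' :=
    Nat.card_congr (Submodule.comapSubtypeEquivOfLe hle).toEquiv
  have hmem : s ^ i ∈ J := Ideal.subset_span rfl
  set f : R →ₗ[R] J := LinearMap.toSpanSingleton R J ⟨s ^ i, hmem⟩ with hf
  set g : R →ₗ[R] J ⧸ N := N.mkQ.comp f with hg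
  have hsurj : Function.Surjective g := by
    intro z
    obtain ⟨y, rfl⟩ := Submodule.Quotient.mk_surjective N z
    have hy : (y : R) ∈ Ideal.span {s ^ i} := y.2
    obtain ⟨c, hc⟩ := Submodule.mem_span_singleton.mp hy
    refine ⟨c, ?_⟩
    have hfc : f c = y := by
      apply Subtype.ext
      simpa [hf, LinearMap.toSpanSingleton_apply] using hc
    show N.mkQ (f c) = _
    rw [hfc, Submodule.mkQ_apply]
  have hker : LinearMap.ker g = maximalIdeal R := by
    ext x
    have : g x = Submodule.Quotient.mk (f x) := rfl
    rw [LinearMap.mem_ker, this, Submodule.Quotient.mk_eq_zero]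
    have hfx : ((f x : J) : R) = x * s ^ i := by
      simp [hf, LinearMap.toSpanSingleton_apply, smul_eq_mul]
    constructor
    · intro hx
      have hx' : x * s ^ i ∈ J' := by rw [← hfx]; exact Submodule.mem_comap.mp hx
      rw [hJ', Ideal.mem_span_singleton] at hx'
      obtain ⟨c, hc⟩ := hx'
      rw [hM, Ideal.mem_span_singleton]
      by_contra hnd
      have hxu : IsUnit x := by
        by_contra hnu
        exact hnd (Ideal.mem_span_singleton.mp (hM ▸ (hnu : x ∈ maximalIdeal R)))
      obtain ⟨xu, rfl⟩ := hxu
      have hsi : (s : R) ^ i = s ^ i * (s * (c * (xu⁻¹ : Rˣ))) := by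
        have := congrArg (fun y => ((xu⁻¹ : Rˣ) : R) * y) hc
        calc (s:R)^i = ((xu⁻¹ : Rˣ) : R) * ((xu : R) * s ^ i) := by
              rw [← mul_assoc, Units.inv_mul, one_mul]
          _ = ((xu⁻¹ : Rˣ) : R) * (s ^ (i+1) * c) := by rw [hc]
          _ = s ^ i * (s * (c * ((xu⁻¹ : Rˣ) : R))) := by rw [pow_succ]; ring
      have hz : s ^ i * (1 - s * (c * ((xu⁻¹ : Rˣ) : R))) = 0 := by
        rw [mul_sub, mul_one, ← hsi, sub_self]
      have hunit : IsUnit (1 - s * (c * ((xu⁻¹ : Rˣ) : R))) := by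
        by_contra hnu
        have h1 : s * (c * ((xu⁻¹ : Rˣ) : R)) ∈ maximalIdeal R := by
          rw [hM]
          exact Ideal.mem_span_singleton.mpr ⟨_, rfl⟩
        have h2 : (1 - s * (c * ((xu⁻¹ : Rˣ) : R))) ∈ maximalIdeal R := hnu
        have : (1 : R) ∈ maximalIdeal R := by
          have := add_mem h2 h1
          simpa using this
        exact (maximalIdeal.isMaximal R).ne_top (Ideal.eq_top_of_isUnit_mem _ this isUnit_one)
      have : s ^ i = 0 := by
        obtain ⟨w, hw⟩ := hunit
        have := congrArg (fun y => y * ((w⁻¹ : Rˣ) : R)) hz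
        simpa [← hw, mul_assoc, Units.mul_inv, zero_mul] using this
      exact pow_ne_zero_of_lt' hst' hi this
    · intro hx
      rw [hM, Ideal.mem_span_singleton] at hx
      obtain ⟨c, rfl⟩ := hx
      show f _ ∈ N
      apply Submodule.mem_comap.mpr
      have h3 : ((f (s * c) : J) : R) = s ^ (i+1) * c := by
        simp only [hf, LinearMap.toSpanSingleton_apply, SetLike.val_smul, smul_eq_mul, pow_succ]; ring
      rw [Submodule.subtype_apply, h3]
      exact Ideal.mem_span_singleton.mpr ⟨c, rfl⟩
  have hquot : Nat.card (J ⧸ N) = 2 := by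
    have e1 := LinearMap.quotKerEquivOfSurjective g hsurj
    rw [hker] at e1
    rw [← Nat.card_congr e1.toEquiv, hres]
  rw [hcard, hcN, hquot]

lemma card_span_pow (hres : Nat.card (R ⧸ maximalIdeal R) = 2)
    (hM : maximalIdeal R = Ideal.span {s}) (hst : s ^ t = 0) (hst' : s ^ (t-1) ≠ 0) :
    ∀ d, d ≤ t → Nat.card (Ideal.span {s ^ (t - d)} : Ideal R) = 2 ^ d := by
  intro d
  induction d with
  | zero =>
    intro _
    simp only [Nat.sub_zero, hst, pow_zero]
    have : (Ideal.span {(0:R)} : Ideal R) = ⊥ := Ideal.span_singleton_eq_bot.mpr rfl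
    rw [this]
    exact Nat.card_unique
  | succ d ih =>
    intro hd
    have h1 : t - (d+1) < t := by omega
    have h2 : t - (d+1) + 1 = t - d := by omega
    rw [card_span_succ hres hM hst' h1, h2, ih (by omega), pow_succ]
end Card
open IsLocalRing

section Units
variable {R : Type*} [CommRing R] [IsLocalRing R] [Finite R]

lemma isUnit_cast_of_odd (hres : Nat.card (R ⧸ maximalIdeal R) = 2)
    {m : ℕ} (hm : Odd m) : IsUnit ((m : ℕ) : R) := by
  by_contra hnu
  have hmem : ((m : ℕ) : R) ∈ maximalIdeal R := hnu
  have hz : ((m : ℕ) : R ⧸ maximalIdeal R) = 0 := by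
    rw [← map_natCast (Ideal.Quotient.mk (maximalIdeal R))]
    exact Ideal.Quotient.eq_zero_iff_mem.mpr hmem
  have h2 : (2 : R ⧸ maximalIdeal R) = 0 := by
    have := card_nsmul_eq_zero' (x := (1 : R ⧸ maximalIdeal R))
    rwa [hres, nsmul_eq_mul, mul_one, Nat.cast_ofNat] at this
  obtain ⟨l, hl⟩ := hm
  have : ((m : ℕ) : R ⧸ maximalIdeal R) = 1 := by
    rw [hl]
    push_cast
    rw [h2]
    ring
  rw [this] at hz
  exact one_ne_zero hz
end Units

section Grp
variable {G : Type*} [CommGroup G] [Fintype G]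

lemma mem_zpowers_pow_iff' {g : G} {p m d : ℕ} (h : orderOf g = p ^ m) (hd : d ≤ m) (x : ℤ) :
    g ^ x ∈ Subgroup.zpowers (g ^ p ^ d) ↔ ((p : ℤ) ^ d) ∣ x := by
  constructor
  · rintro ⟨y, hy⟩
    have h1 : g ^ ((p : ℤ) ^ d * y) = g ^ x := by
      rw [zpow_mul, ← hy]
      norm_cast
    have h2 : g ^ (x - (p : ℤ) ^ d * y) = 1 := by
      rw [zpow_sub, h1, mul_inv_cancel]
    have h3 := orderOf_dvd_iff_zpow_eq_one.mpr h2
    rw [h] at h3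
    push_cast at h3
    have h4 : ((p : ℤ)) ^ d ∣ ((p : ℤ)) ^ m := pow_dvd_pow _ hd
    have h5 : ((p : ℤ)) ^ d ∣ x - (p : ℤ) ^ d * y := dvd_trans h4 h3
    have h6 := dvd_add h5 (dvd_mul_right ((p : ℤ) ^ d) y)
    rwa [sub_add_cancel] at h6
  · rintro ⟨c, rfl⟩
    refine ⟨c, ?_⟩
    show (g ^ p ^ d) ^ c = _
    rw [← zpow_natCast g (p ^ d), ← zpow_mul]
    norm_cast

lemma card_zpowers_pow {a : G} {p n d : ℕ} (hp : 0 < p) (hord : orderOf a = p ^ n)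
    (hd : d ≤ n) : Nat.card (Subgroup.zpowers (a ^ p ^ d)) = p ^ (n - d) := by
  rw [Nat.card_zpowers, orderOf_pow, hord, Nat.gcd_eq_right (pow_dvd_pow p hd),
    Nat.pow_div hd hp]

lemma pow_mul_pow_inv_mem_iff {a : G} {p n d : ℕ} (hord : orderOf a = p ^ n)
    (hd : d ≤ n) (m i : ℕ) :
    a ^ m * (a ^ i)⁻¹ ∈ Subgroup.zpowers (a ^ p ^ d) ↔ i % p ^ d = m % p ^ d := by
  have h1 : a ^ m * (a ^ i)⁻¹ = a ^ ((m : ℤ) - (i : ℤ)) := by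
    rw [zpow_sub, zpow_natCast, zpow_natCast]
  rw [h1, mem_zpowers_pow_iff' hord hd]
  rw [show ((p : ℤ) ^ d) = ((p ^ d : ℕ) : ℤ) by push_cast; ring]
  exact ⟨fun h => Nat.modEq_iff_dvd.mpr h, fun h => Nat.modEq_iff_dvd.mp h⟩
end Grp

section MA
open scoped Classical
variable {R : Type*} [CommRing R] {G : Type*} [CommGroup G] [Fintype G]

noncomputable def hatD (R : Type*) [CommRing R] {G : Type*} [CommGroup G] [Fintype G]
    (H : Subgroup G) : MonoidAlgebra R G :=
  Ring.inverse ((Nat.card H : R)) •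
    ∑ h ∈ (H : Set G).toFinite.toFinset, MonoidAlgebra.single h (1 : R)

lemma sum_translate_apply (H : Subgroup G) (g y : G) :
    ((∑ h ∈ (H : Set G).toFinite.toFinset, MonoidAlgebra.single (h * g) (1 : R))).coeff y
      = if y * g⁻¹ ∈ H then 1 else 0 := by
  classical
  rw [MonoidAlgebra.coeff_sum, Finsupp.finset_sum_apply]
  have h1 : ∀ h ∈ (H : Set G).toFinite.toFinset,
      (MonoidAlgebra.single (h * g) (1 : R)).coeff y = if h = y * g⁻¹ then 1 else 0 := by
    intro h _
    rw [MonoidAlgebra.coeff_single, Finsupp.single_apply]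
    congr 1
    simp only [eq_iff_iff]
    constructor
    · rintro rfl; rw [mul_inv_cancel_right]
    · rintro rfl; rw [inv_mul_cancel_right]
  rw [Finset.sum_congr rfl h1, Finset.sum_ite_eq' ((H : Set G).toFinite.toFinset) (y * g⁻¹)
    (fun _ => (1 : R))]
  exact if_congr (by rw [Set.Finite.mem_toFinset]; exact Iff.rfl) rfl rfl

lemma hat_mul_single_apply (H : Subgroup G) (g y : G) :
    (hatD R H * MonoidAlgebra.single g (1 : R)).coeff y
      = Ring.inverse ((Nat.card H : R)) * (if y * g⁻¹ ∈ H then 1 else 0) := by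
  rw [hatD, smul_mul_assoc, Finset.sum_mul]
  simp_rw [MonoidAlgebra.single_mul_single, one_mul]
  rw [MonoidAlgebra.coeff_smul_apply, sum_translate_apply, smul_eq_mul]

lemma hat_apply (H : Subgroup G) (y : G) :
    (hatD R H).coeff y = Ring.inverse ((Nat.card H : R)) * (if y ∈ H then 1 else 0) := by
  have h := hat_mul_single_apply (R := R) H 1 y
  simp only [← MonoidAlgebra.one_def, mul_one, inv_one] at h
  rw [h]

lemma hat_mul_single_mem (H : Subgroup G) {h : G} (hh : h ∈ H) :
    hatD R H * MonoidAlgebra.single h (1 : R) = hatD R H := by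
  apply MonoidAlgebra.ext
  apply Finsupp.ext
  intro y
  rw [hat_mul_single_apply, hat_apply]
  have h2 : (y * h⁻¹ ∈ H) = (y ∈ H) := propext (H.mul_mem_cancel_right (inv_mem hh))
  rw [h2]
end MA
section ESpec
open IsLocalRing MonoidAlgebra
variable {R : Type*} [CommRing R] [IsLocalRing R] [Finite R]
variable {G : Type*} [CommGroup G] [Fintype G]
variable {a : G} {p n j : ℕ}

lemma odd_unit_cast (hres : Nat.card (R ⧸ maximalIdeal R) = 2) (hpodd : Odd p) (m : ℕ) :
    IsUnit ((p ^ m : ℕ) : R) := isUnit_cast_of_odd hres (hpodd.pow)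

lemma inv_card_rel (hres : Nat.card (R ⧸ maximalIdeal R) = 2)
    (hp : 0 < p) (hpodd : Odd p) (hord : orderOf a = p ^ n) (hj1 : 1 ≤ j) (hjn : j ≤ n) :
    Ring.inverse ((Nat.card (Subgroup.zpowers (a ^ p ^ j)) : R))
      = (p : R) * Ring.inverse ((Nat.card (Subgroup.zpowers (a ^ p ^ (j - 1))) : R)) := by
  rw [card_zpowers_pow hp hord hjn, card_zpowers_pow hp hord (le_trans (Nat.sub_le j 1) hjn)]
  have h1 : (((p : ℕ) ^ (n - (j - 1)) : ℕ) : R) = (p : R) * ((p ^ (n - j) : ℕ) : R) := by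
    push_cast
    rw [← pow_succ']
    congr 1
    omega
  rw [h1, Ring.mul_inverse_rev]
  have hu1 : IsUnit ((p ^ (n - j) : ℕ) : R) := odd_unit_cast hres hpodd _
  have hup : IsUnit ((p : R)) := by
    have := odd_unit_cast (R := R) hres hpodd 1
    simpa using this
  rw [← mul_assoc, mul_comm (p : R) _, mul_assoc]
  rw [Ring.mul_inverse_cancel _ hup, mul_one]

lemma e_single_apply (hord : orderOf a = p ^ n) (hj1 : 1 ≤ j) (hjn : j ≤ n) (i m : ℕ) :
    ((hatD R (Subgroup.zpowers (a ^ p ^ j)) - hatD R (Subgroup.zpowers (a ^ p ^ (j - 1))))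
        * MonoidAlgebra.single (a ^ i) (1 : R)).coeff (a ^ m)
      = Ring.inverse ((Nat.card (Subgroup.zpowers (a ^ p ^ j)) : R)) *
          (if i % p ^ j = m % p ^ j then 1 else 0)
        - Ring.inverse ((Nat.card (Subgroup.zpowers (a ^ p ^ (j - 1))) : R)) *
          (if i % p ^ (j - 1) = m % p ^ (j - 1) then 1 else 0) := by
  classical
  rw [sub_mul, MonoidAlgebra.coeff_sub, Finsupp.sub_apply, hat_mul_single_apply, hat_mul_single_apply]
  congr 2
  · exact if_congr (pow_mul_pow_inv_mem_iff hord hjn m i) rfl rfl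
  · exact if_congr (pow_mul_pow_inv_mem_iff hord (le_trans (Nat.sub_le j 1) hjn) m i) rfl rfl

lemma e_mul_single_pow (hj1 : 1 ≤ j) :
    (hatD R (Subgroup.zpowers (a ^ p ^ j)) - hatD R (Subgroup.zpowers (a ^ p ^ (j - 1))))
        * MonoidAlgebra.single (a ^ p ^ j) (1 : R)
      = hatD R (Subgroup.zpowers (a ^ p ^ j)) - hatD R (Subgroup.zpowers (a ^ p ^ (j - 1))) := by
  rw [sub_mul, hat_mul_single_mem _ (Subgroup.mem_zpowers _), hat_mul_single_mem]
  have h1 : a ^ p ^ j = (a ^ p ^ (j - 1)) ^ p := by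
    rw [← pow_mul]
    congr 1
    rw [← pow_succ]
    congr 1
    omega
  rw [h1]
  exact Subgroup.pow_mem _ (Subgroup.mem_zpowers _) p
end ESpec
section Phi
open IsLocalRing MonoidAlgebra
variable {R : Type*} [CommRing R] [IsLocalRing R] [Finite R]
variable {G : Type*} [CommGroup G] [Fintype G]
variable {a : G} {p n j : ℕ}

lemma exists_pow_eq {a : G} (hgen : ∀ x : G, x ∈ Subgroup.zpowers a) (y : G) :
    ∃ m : ℕ, y = a ^ m := by
  obtain ⟨m, hm⟩ := mem_powers_iff_mem_zpowers.mpr (hgen y)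
  exact ⟨m, hm.symm⟩

lemma eq_zero_of_inverse_mul {x y : R} (hx : IsUnit x) (h : Ring.inverse x * y = 0) :
    y = 0 := by
  have h2 := congrArg (fun z => x * z) h
  simp only [← mul_assoc, Ring.mul_inverse_cancel x hx, one_mul, mul_zero] at h2
  exact h2

lemma e_mul_phi (hres : Nat.card (R ⧸ maximalIdeal R) = 2)
    (hp : p.Prime) (hpodd : Odd p) (hord : orderOf a = p ^ n)
    (hgen : ∀ x : G, x ∈ Subgroup.zpowers a) (hj1 : 1 ≤ j) (hjn : j ≤ n) :
    (hatD R (Subgroup.zpowers (a ^ p ^ j)) - hatD R (Subgroup.zpowers (a ^ p ^ (j - 1))))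
        * (∑ i ∈ Finset.range p, MonoidAlgebra.single (a ^ (p ^ (j - 1) * i)) (1 : R)) = 0 := by
  classical
  set Q := p ^ (j - 1) with hQdef
  set P := p ^ j with hPdef
  have hPQ : P = Q * p := by rw [hQdef, hPdef, ← pow_succ]; congr 1; omega
  have hQ0 : 0 < Q := pow_pos hp.pos _
  have hP0 : 0 < P := pow_pos hp.pos _
  apply MonoidAlgebra.ext
  apply Finsupp.ext
  intro y
  obtain ⟨m, rfl⟩ := exists_pow_eq hgen y
  rw [Finset.mul_sum, MonoidAlgebra.coeff_sum, Finsupp.finset_sum_apply]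
  have hterm : ∀ i ∈ Finset.range p,
      ((hatD R (Subgroup.zpowers (a ^ p ^ j)) - hatD R (Subgroup.zpowers (a ^ p ^ (j - 1))))
        * MonoidAlgebra.single (a ^ (Q * i)) (1 : R)).coeff (a ^ m)
      = Ring.inverse ((Nat.card (Subgroup.zpowers (a ^ p ^ j)) : R)) *
          (if (Q * i) % P = m % P then 1 else 0)
        - Ring.inverse ((Nat.card (Subgroup.zpowers (a ^ p ^ (j - 1))) : R)) *
          (if (Q * i) % Q = m % Q then 1 else 0) := by
    intro i _
    exact e_single_apply hord hj1 hjn (Q * i) m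
  rw [Finset.sum_congr rfl hterm, Finset.sum_sub_distrib, ← Finset.mul_sum, ← Finset.mul_sum]
  have key1 : (∑ i ∈ Finset.range p, if (Q * i) % P = m % P then (1:R) else 0)
      = if Q ∣ m then 1 else 0 := by
    by_cases hd : Q ∣ m
    · have hd' : Q ∣ m % P := (Nat.dvd_mod_iff ⟨p, hPQ⟩).mpr hd
      obtain ⟨c, hc⟩ := hd'
      have hcp : c < p := by
        have h3 : m % P < P := Nat.mod_lt _ hP0
        rw [hc, hPQ] at h3
        exact Nat.lt_of_mul_lt_mul_left h3
      have h2 : ∀ i ∈ Finset.range p,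
          (if (Q * i) % P = m % P then (1:R) else 0) = if i = c then 1 else 0 := by
        intro i hi
        refine if_congr ?_ rfl rfl
        rw [Nat.mod_eq_of_lt (by rw [hPQ]; exact (Nat.mul_lt_mul_left hQ0).mpr (Finset.mem_range.mp hi)), hc]
        exact ⟨fun h => Nat.eq_of_mul_eq_mul_left hQ0 h, fun h => by rw [h]⟩
      rw [Finset.sum_congr rfl h2, Finset.sum_ite_eq' (Finset.range p) c (fun _ => (1:R))]
      rw [if_pos (Finset.mem_range.mpr hcp), if_pos hd]
    · rw [if_neg hd]
      apply Finset.sum_eq_zero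
      intro i hi
      rw [if_neg]
      intro hcon
      apply hd
      rw [Nat.mod_eq_of_lt (by rw [hPQ]; exact (Nat.mul_lt_mul_left hQ0).mpr (Finset.mem_range.mp hi))] at hcon
      exact (Nat.dvd_mod_iff ⟨p, hPQ⟩).mp ⟨i, hcon.symm⟩
  have key0 : (∑ i ∈ Finset.range p, if (Q * i) % Q = m % Q then (1:R) else 0)
      = if Q ∣ m then (p : R) else 0 := by
    have h2 : ∀ i ∈ Finset.range p,
        (if (Q * i) % Q = m % Q then (1:R) else 0) = if Q ∣ m then 1 else 0 := by
      intro i _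
      refine if_congr ?_ rfl rfl
      rw [Nat.mul_mod_right]
      rw [Nat.dvd_iff_mod_eq_zero]
      exact eq_comm
    rw [Finset.sum_congr rfl h2, Finset.sum_const, Finset.card_range]
    by_cases hd : Q ∣ m
    · rw [if_pos hd, if_pos hd]; simp
    · rw [if_neg hd, if_neg hd]; simp
  rw [key1, key0, inv_card_rel hres hp.pos hpodd hord hj1 hjn]
  by_cases hd : Q ∣ m
  · rw [if_pos hd, if_pos hd, MonoidAlgebra.coeff_zero, Finsupp.zero_apply]
    ring
  · rw [if_neg hd, if_neg hd, MonoidAlgebra.coeff_zero, Finsupp.zero_apply]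
    ring
end Phi
section SpanIndep
open IsLocalRing MonoidAlgebra
variable {R : Type*} [CommRing R] [IsLocalRing R] [Finite R]
variable {G : Type*} [CommGroup G] [Fintype G]
variable {a : G} {p n j : ℕ}

lemma span_mem (hres : Nat.card (R ⧸ maximalIdeal R) = 2)
    (hp : p.Prime) (hpodd : Odd p) (hord : orderOf a = p ^ n)
    (hgen : ∀ x : G, x ∈ Subgroup.zpowers a) (hj1 : 1 ≤ j) (hjn : j ≤ n) :
    ∀ m : ℕ,
      (hatD R (Subgroup.zpowers (a ^ p ^ j)) - hatD R (Subgroup.zpowers (a ^ p ^ (j - 1))))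
          * MonoidAlgebra.single (a ^ m) (1 : R)
        ∈ Submodule.span R (Set.range (fun i : Fin (p ^ j - p ^ (j - 1)) =>
            (hatD R (Subgroup.zpowers (a ^ p ^ j)) - hatD R (Subgroup.zpowers (a ^ p ^ (j - 1))))
              * MonoidAlgebra.single (a ^ (i : ℕ)) (1 : R))) := by
  classical
  set Q := p ^ (j - 1) with hQdef
  set P := p ^ j with hPdef
  set φ := P - Q with hφdef
  set e := hatD R (Subgroup.zpowers (a ^ p ^ j)) - hatD R (Subgroup.zpowers (a ^ p ^ (j - 1)))
    with hedef
  have hPQ : P = Q * p := by rw [hQdef, hPdef, ← pow_succ]; congr 1; omega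
  have hQ0 : 0 < Q := pow_pos hp.pos _
  have hP0 : 0 < P := pow_pos hp.pos _
  have hp2 : 2 ≤ p := hp.two_le
  have hφeq : φ = Q * (p - 1) := by rw [hφdef, hPQ]; cases p with
    | zero => omega
    | succ pp => rw [Nat.mul_sub, Nat.mul_one]
  have hφQ : φ + Q = P := by rw [hφdef]; have : Q ≤ P := by rw [hPQ]; nlinarith
                             omega
  intro m
  induction m using Nat.strong_induction_on with
  | _ m ih =>
    by_cases h1 : m < φ
    · exact Submodule.subset_span ⟨⟨m, h1⟩, rfl⟩
    · by_cases h2 : m < P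
      · -- φ ≤ m < P
        set q := m - φ with hqdef
        have hqQ : q < Q := by omega
        have hsum0 : e * (∑ i ∈ Finset.range p,
            MonoidAlgebra.single (a ^ (Q * i)) (1 : R)) = 0 :=
          e_mul_phi hres hp hpodd hord hgen hj1 hjn
        have hsum1 : (∑ i ∈ Finset.range p, e * MonoidAlgebra.single (a ^ (Q * i + q)) (1 : R))
            = 0 := by
          have h3 := congrArg (fun z => z * MonoidAlgebra.single (a ^ q) (1 : R)) hsum0
          simp only [zero_mul] at h3
          rw [Finset.mul_sum, Finset.sum_mul] at h3
          have h4 : ∀ i ∈ Finset.range p,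
              e * MonoidAlgebra.single (a ^ (Q * i)) (1:R) * MonoidAlgebra.single (a ^ q) (1:R)
                = e * MonoidAlgebra.single (a ^ (Q * i + q)) (1:R) := by
            intro i _
            rw [mul_assoc, MonoidAlgebra.single_mul_single, one_mul, ← pow_add]
          rwa [Finset.sum_congr rfl h4] at h3
        have hm : m = Q * (p - 1) + q := by omega
        have hlast : e * MonoidAlgebra.single (a ^ m) (1 : R)
            = - ∑ i ∈ Finset.range (p - 1), e * MonoidAlgebra.single (a ^ (Q * i + q)) (1:R) := by
          have h5 : p - 1 + 1 = p := by omega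
          rw [← h5, Finset.sum_range_succ] at hsum1
          rw [hm]
          linear_combination hsum1
        rw [hlast]
        apply neg_mem
        apply Submodule.sum_mem
        intro i hi
        have hip : i < p - 1 := Finset.mem_range.mp hi
        have hlt : Q * i + q < φ := by
          rw [hφeq]
          have : Q * i ≤ Q * (p - 2) := Nat.mul_le_mul_left Q (by omega)
          have h6 : Q * (p - 2) + Q = Q * (p - 1) := by
            rw [← Nat.mul_succ]; congr 1; omega
          omega
        exact Submodule.subset_span ⟨⟨Q * i + q, hlt⟩, rfl⟩
      · -- m ≥ P
        have h3 : e * MonoidAlgebra.single (a ^ m) (1 : R)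
            = e * MonoidAlgebra.single (a ^ (m - P)) (1 : R) := by
          have h4 : e * MonoidAlgebra.single (a ^ m) (1 : R)
              = (e * MonoidAlgebra.single (a ^ P) (1 : R))
                  * MonoidAlgebra.single (a ^ (m - P)) (1 : R) := by
            rw [mul_assoc, MonoidAlgebra.single_mul_single, one_mul, ← pow_add]
            congr 3
            omega
          rw [h4, hedef, e_mul_single_pow hj1]
        rw [h3]
        exact ih (m - P) (by omega)

lemma indep (hres : Nat.card (R ⧸ maximalIdeal R) = 2)
    (hp : p.Prime) (hpodd : Odd p) (hord : orderOf a = p ^ n)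
    (hj1 : 1 ≤ j) (hjn : j ≤ n)
    (f : Fin (p ^ j - p ^ (j - 1)) → R)
    (hf : (∑ i : Fin (p ^ j - p ^ (j - 1)), f i •
        ((hatD R (Subgroup.zpowers (a ^ p ^ j)) - hatD R (Subgroup.zpowers (a ^ p ^ (j - 1))))
          * MonoidAlgebra.single (a ^ (i : ℕ)) (1 : R))) = 0) :
    ∀ i, f i = 0 := by
  classical
  revert f
  set Q := p ^ (j - 1) with hQdef
  set P := p ^ j with hPdef
  set φ := P - Q with hφdef
  have hPQ : P = Q * p := by rw [hQdef, hPdef, ← pow_succ]; congr 1; omega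
  have hQ0 : 0 < Q := pow_pos hp.pos _
  have hP0 : 0 < P := pow_pos hp.pos _
  have hp2 : 2 ≤ p := hp.two_le
  have hφeq : φ = Q * (p - 1) := by rw [hφdef, hPQ]; cases p with
    | zero => omega
    | succ pp => rw [Nat.mul_sub, Nat.mul_one]
  have hφQ : φ + Q = P := by rw [hφdef]; have : Q ≤ P := by rw [hPQ]; nlinarith
                             omega
  have hu1 : IsUnit ((Nat.card (Subgroup.zpowers (a ^ p ^ j)) : R)) := by
    rw [card_zpowers_pow hp.pos hord hjn]
    exact odd_unit_cast hres hpodd _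
  have hu0 : IsUnit ((Nat.card (Subgroup.zpowers (a ^ p ^ (j - 1))) : R)) := by
    rw [card_zpowers_pow hp.pos hord (le_trans (Nat.sub_le j 1) hjn)]
    exact odd_unit_cast hres hpodd _
  set inv1 := Ring.inverse ((Nat.card (Subgroup.zpowers (a ^ p ^ j)) : R)) with hinv1
  set inv0 := Ring.inverse ((Nat.card (Subgroup.zpowers (a ^ p ^ (j - 1))) : R)) with hinv0
  intro f hf
  -- coefficient formula
  have coeff : ∀ m : ℕ,
      inv1 * (∑ i ∈ Finset.univ.filter (fun i : Fin φ => (i : ℕ) % P = m % P), f i)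
        - inv0 * (∑ i ∈ Finset.univ.filter (fun i : Fin φ => (i : ℕ) % Q = m % Q), f i)
      = 0 := by
    intro m
    have h1 := congrArg (fun z : MonoidAlgebra R G => z.coeff (a ^ m)) hf
    simp only [MonoidAlgebra.coeff_zero, Finsupp.zero_apply] at h1
    rw [MonoidAlgebra.coeff_sum, Finsupp.finset_sum_apply] at h1
    have h2 : ∀ i ∈ (Finset.univ : Finset (Fin φ)),
        (f i • ((hatD R (Subgroup.zpowers (a ^ p ^ j))
            - hatD R (Subgroup.zpowers (a ^ p ^ (j - 1))))
          * MonoidAlgebra.single (a ^ (i : ℕ)) (1 : R))).coeff (a ^ m)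
        = inv1 * (if (i : ℕ) % P = m % P then f i else 0)
          - inv0 * (if (i : ℕ) % Q = m % Q then f i else 0) := by
      intro i _
      rw [MonoidAlgebra.coeff_smul_apply, e_single_apply hord hj1 hjn (i : ℕ) m, smul_eq_mul]
      rw [mul_sub]
      congr 1
      · by_cases hc : (i : ℕ) % P = m % P
        · rw [if_pos hc, if_pos hc]; ring
        · rw [if_neg hc, if_neg hc]; ring
      · by_cases hc : (i : ℕ) % Q = m % Q
        · rw [if_pos hc, if_pos hc]; ring
        · rw [if_neg hc, if_neg hc]; ring
    rw [Finset.sum_congr rfl h2, Finset.sum_sub_distrib, ← Finset.mul_sum, ← Finset.mul_sum] at h1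
    rw [← Finset.sum_filter, ← Finset.sum_filter] at h1
    exact h1
  -- Step B
  have stepB : ∀ q : ℕ, q < Q →
      (∑ i ∈ Finset.univ.filter (fun i : Fin φ => (i : ℕ) % Q = q), f i) = 0 := by
    intro q hq
    have hm := coeff (q + φ)
    have hmP : q + φ < P := by omega
    have hmQ : (q + φ) % Q = q := by
      rw [hφeq, Nat.add_mul_mod_self_left, Nat.mod_eq_of_lt hq]
    have hPempty : (Finset.univ.filter (fun i : Fin φ => (i : ℕ) % P = (q + φ) % P))
        = (∅ : Finset (Fin φ)) := by
      apply Finset.filter_false_of_mem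
      intro i _
      have hiφ : (i : ℕ) < φ := i.2
      rw [Nat.mod_eq_of_lt (by omega : (i : ℕ) < P), Nat.mod_eq_of_lt hmP]
      omega
    rw [hPempty, Finset.sum_empty, mul_zero, zero_sub, hmQ, neg_eq_zero] at hm
    exact eq_zero_of_inverse_mul hu0 hm
  -- Step C
  intro i0
  have hm := coeff (i0 : ℕ)
  have hi0φ : (i0 : ℕ) < φ := i0.2
  have hPsingle : (Finset.univ.filter (fun i : Fin φ => (i : ℕ) % P = (i0 : ℕ) % P))
      = {i0} := by
    apply Finset.ext
    intro i
    simp only [Finset.mem_filter, Finset.mem_univ, true_and, Finset.mem_singleton]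
    have hiφ : (i : ℕ) < φ := i.2
    rw [Nat.mod_eq_of_lt (by omega : (i : ℕ) < P), Nat.mod_eq_of_lt (by omega : (i0 : ℕ) < P)]
    constructor
    · intro h; exact Fin.ext h
    · intro h; rw [h]
  have hQT := stepB ((i0 : ℕ) % Q) (Nat.mod_lt _ hQ0)
  rw [hPsingle, Finset.sum_singleton, hQT, mul_zero, sub_zero] at hm
  exact eq_zero_of_inverse_mul hu1 hm
end SpanIndep
/-- Let `R` be a finite commutative chain ring with residue field of order `2` and maximal
ideal `⟨s⟩` of nilpotency index `t`, and `G` cyclic of order `p^n` (`p` an odd prime)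
generated by `a`, with `2` a primitive root mod `p^n`. For the idempotent
`e = ⟨a^(p^j)⟩^ − ⟨a^(p^(j-1))⟩^` (`1 ≤ j ≤ n`) and `0 ≤ k < t`, the ideal `⟨s^k e⟩` of
`R[G]` has cardinality `2^((t-k)(p^j − p^(j-1)))`. -/
theorem card_code_of_idempotent
    (R : Type*) [CommRing R] [Finite R] [IsLocalRing R]
    (hchain : ∀ I J : Ideal R, I ≤ J ∨ J ≤ I)
    (hres : Nat.card (R ⧸ IsLocalRing.maximalIdeal R) = 2)
    (s : R) (hM : IsLocalRing.maximalIdeal R = Ideal.span {s})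
    (t : ℕ) (ht : 1 ≤ t) (hst : s ^ t = 0) (hst' : s ^ (t - 1) ≠ 0)
    (p n : ℕ) (hp : p.Prime) (hpodd : Odd p)
    (G : Type*) [CommGroup G] [Fintype G]
    (a : G) (hgen : ∀ x : G, x ∈ Subgroup.zpowers a) (hord : orderOf a = p ^ n)
    (h2 : orderOf ((2 : ZMod (p ^ n))) = Nat.totient (p ^ n))
    (j : ℕ) (hj1 : 1 ≤ j) (hjn : j ≤ n) (k : ℕ) (hk : k < t) :
    let hat : Subgroup G → MonoidAlgebra R G := fun H =>
      Ring.inverse ((Nat.card H : R)) •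
        ∑ h ∈ (H : Set G).toFinite.toFinset, MonoidAlgebra.single h (1 : R)
    let e : MonoidAlgebra R G :=
      hat (Subgroup.zpowers (a ^ p ^ j)) - hat (Subgroup.zpowers (a ^ p ^ (j - 1)))
    Nat.card (Ideal.span {s ^ k • e} : Ideal (MonoidAlgebra R G)) =
      2 ^ ((t - k) * (p ^ j - p ^ (j - 1))) := by
  intro hat e
  classical
  have he : e = hatD R (Subgroup.zpowers (a ^ p ^ j))
      - hatD R (Subgroup.zpowers (a ^ p ^ (j - 1))) := rfl
  set φ := p ^ j - p ^ (j - 1) with hφdef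
  set eD : MonoidAlgebra R G := hatD R (Subgroup.zpowers (a ^ p ^ j))
      - hatD R (Subgroup.zpowers (a ^ p ^ (j - 1))) with heD
  set v : Fin φ → MonoidAlgebra R G :=
    fun i => eD * MonoidAlgebra.single (a ^ (i : ℕ)) (1 : R) with hv
  set Jk : Ideal R := Ideal.span {s ^ k} with hJk
  -- membership characterization
  have hchar : ∀ z : MonoidAlgebra R G,
      z ∈ Ideal.span {s ^ k • e} ↔ ∃ c : Fin φ → R, z = ∑ i, (s ^ k * c i) • v i := by
    intro z
    constructor
    · intro hz
      obtain ⟨w, hw⟩ := Ideal.mem_span_singleton'.mp hz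
      have hmem : eD * w ∈ Submodule.span R (Set.range v) := by
        have hw1 : w = ∑ g ∈ w.coeff.support, MonoidAlgebra.single g (w.coeff g) := by
          conv_lhs => rw [← MonoidAlgebra.sum_coeff_single w]
          rfl
        rw [hw1, Finset.mul_sum]
        apply Submodule.sum_mem
        intro g hg
        obtain ⟨m, rfl⟩ := exists_pow_eq hgen g
        have hsm : MonoidAlgebra.single (a ^ m) (w.coeff (a ^ m))
            = (w.coeff (a ^ m)) • MonoidAlgebra.single (a ^ m) (1 : R) := by
          rw [MonoidAlgebra.smul_single', mul_one]
        rw [hsm, mul_smul_comm]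
        exact Submodule.smul_mem _ _ (span_mem hres hp hpodd hord hgen hj1 hjn m)
      obtain ⟨c, hc⟩ := (Submodule.mem_span_range_iff_exists_fun R).mp hmem
      refine ⟨c, ?_⟩
      rw [← hw, he]
      calc w * (s ^ k • eD) = s ^ k • (eD * w) := by
            rw [mul_smul_comm, mul_comm]
        _ = s ^ k • ∑ i, c i • v i := by rw [hc]
        _ = ∑ i, (s ^ k * c i) • v i := by
            rw [Finset.smul_sum]
            apply Finset.sum_congr rfl
            intro i _
            rw [smul_smul]
    · rintro ⟨c, rfl⟩
      apply Ideal.sum_mem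
      intro i _
      have hvi : v i = eD * MonoidAlgebra.single (a ^ (i : ℕ)) (1 : R) := rfl
      have hterm : (s ^ k * c i) • v i
          = (c i • MonoidAlgebra.single (a ^ (i : ℕ)) (1 : R)) * (s ^ k • e) := by
        rw [he, hvi, smul_mul_assoc, mul_smul_comm, smul_smul, mul_comm eD, mul_comm (s ^ k)]
      rw [hterm]
      exact Ideal.mul_mem_left _ _ (Ideal.subset_span rfl)
  -- the equivalence
  have hJmem : ∀ c : Fin φ → Jk, ∀ i, ∃ d : R, (c i : R) = s ^ k * d := by
    intro c i
    obtain ⟨d, hd⟩ := Ideal.mem_span_singleton'.mp (c i).2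
    exact ⟨d, by rw [← hd, mul_comm]⟩
  set F : (Fin φ → Jk) → ↥(Ideal.span {s ^ k • e} : Ideal (MonoidAlgebra R G)) :=
    fun c => ⟨∑ i, (c i : R) • v i, by
      refine (hchar _).mpr ⟨fun i => Classical.choose (hJmem c i), ?_⟩
      apply Finset.sum_congr rfl
      intro i _
      rw [← Classical.choose_spec (hJmem c i)]⟩ with hF
  have hbij : Function.Bijective F := by
    constructor
    · intro c c' hcc
      have h3 : ∑ i, (c i : R) • v i = ∑ i, (c' i : R) • v i := congrArg Subtype.val hcc
      have h4 : ∑ i, ((c i : R) - (c' i : R)) • v i = 0 := by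
        simp only [sub_smul]
        rw [Finset.sum_sub_distrib, h3, sub_self]
      have h5 := indep hres hp hpodd hord hj1 hjn (fun i => (c i : R) - (c' i : R)) h4
      funext i
      exact Subtype.ext (sub_eq_zero.mp (h5 i))
    · rintro ⟨z, hz⟩
      obtain ⟨c, hc⟩ := (hchar z).mp hz
      refine ⟨fun i => ⟨s ^ k * c i, Ideal.mem_span_singleton'.mpr ⟨c i, mul_comm _ _⟩⟩, ?_⟩
      exact Subtype.ext hc.symm
  have hcard1 : Nat.card (Ideal.span {s ^ k • e} : Ideal (MonoidAlgebra R G))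
      = Nat.card (Fin φ → Jk) := (Nat.card_congr (Equiv.ofBijective F hbij)).symm
  rw [hcard1, Nat.card_pi, Finset.prod_const, Finset.card_univ, Fintype.card_fin]
  have hcardJk : Nat.card Jk = 2 ^ (t - k) := by
    have h6 := card_span_pow hres hM hst hst' (t - k) (by omega)
    rw [show t - (t - k) = k by omega] at h6
    exact h6
  rw [hcardJk, ← pow_mul]
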